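/- Let n be a nonnegative integer. (i) ∫_0^1 x^n · H_1(x) dx = (1/(n+1)^2) · (1 + (n+1)·S_1(n)), where H_1(x) = −log(1−x) and S_1(n) = Σ_{i=1}^{n} 1/i. (ii) For every real a > 1: ∫_0^1 x^n · H_a(x) dx = (1/(n+1)^2) · ( 1 + a^{n+1}(n+1)·S_1(1/a;n) − (a^{n+1}−1)(n+1)·S_1(1/a;∞) ), where H_a(x) = ∫_0^x dy/(a−y) = log(a/(a−x)) and S_1(1/a;∞) = Σ_{i=1}^{∞} a^{−i}/i. -/

import Mathlib

open intervalIntegral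

private lemma mwo_sum_shift (b : ℝ) (n : ℕ) :
    ∑ k ∈ Finset.range (n+1), b^(k+1)/((k:ℝ)+1)
      = (∑ i ∈ Finset.Icc 1 n, b^i/(i:ℝ)) + b^(n+1)/((n:ℝ)+1) := by
  induction n with
  | zero => simp
  | succ m ih =>
      rw [Finset.sum_range_succ, ih, Finset.sum_Icc_succ_top (by omega)]
      push_cast
      ring

private lemma mwo_deriv_i (n : ℕ) (x : ℝ) (hx : x ≠ 1) :
    HasDerivAt (fun y : ℝ => (y^(n+1) - 1)/((n:ℝ)+1) * (-Real.log (1-y)) +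
      (∑ k ∈ Finset.range (n+1), y^(k+1)/((k:ℝ)+1))/((n:ℝ)+1))
      (x ^ n * (-Real.log (1-x))) x := by
  have h1x : (1:ℝ) - x ≠ 0 := sub_ne_zero.mpr (Ne.symm hx)
  have hx1 : x - 1 ≠ 0 := sub_ne_zero.mpr hx
  have hn : ((n:ℝ)+1) ≠ 0 := by positivity
  have h1 : HasDerivAt (fun y : ℝ => (y^(n+1) - 1)/((n:ℝ)+1)) (x^n) x := by
    have := ((hasDerivAt_pow (n+1) x).sub_const 1).div_const ((n:ℝ)+1)
    refine this.congr_deriv ?_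
    push_cast
    field_simp
  have h2 : HasDerivAt (fun y : ℝ => -Real.log (1-y)) ((1-x)⁻¹) x := by
    have hlog := (Real.hasDerivAt_log h1x).comp x ((hasDerivAt_id x).const_sub 1)
    have := hlog.neg
    refine this.congr_deriv ?_
    field_simp
  have hterm : ∀ k ∈ Finset.range (n+1),
      HasDerivAt (fun y : ℝ => y^(k+1)/((k:ℝ)+1)) (x^k) x := by
    intro k _
    have := (hasDerivAt_pow (k+1) x).div_const ((k:ℝ)+1)
    refine this.congr_deriv ?_
    push_cast
    field_simp
  have hsum := (HasDerivAt.fun_sum hterm).div_const ((n:ℝ)+1)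
  have := (h1.mul h2).add hsum
  refine this.congr_deriv ?_
  rw [geom_sum_eq hx]
  field_simp
  ring

private lemma mwo_deriv_ii (n : ℕ) (a x : ℝ) (hax : a - x ≠ 0) (hxa : x ≠ a) :
    HasDerivAt (fun y : ℝ => (y^(n+1) - a^(n+1))/((n:ℝ)+1) * (Real.log a - Real.log (a-y)) +
      (∑ k ∈ Finset.range (n+1), a^(n-k) * y^(k+1)/((k:ℝ)+1))/((n:ℝ)+1))
      (x ^ n * (Real.log a - Real.log (a-x))) x := by
  have hxa' : x - a ≠ 0 := sub_ne_zero.mpr hxa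
  have hn : ((n:ℝ)+1) ≠ 0 := by positivity
  have h1 : HasDerivAt (fun y : ℝ => (y^(n+1) - a^(n+1))/((n:ℝ)+1)) (x^n) x := by
    have := ((hasDerivAt_pow (n+1) x).sub_const (a^(n+1))).div_const ((n:ℝ)+1)
    refine this.congr_deriv ?_
    push_cast
    field_simp
  have h2 : HasDerivAt (fun y : ℝ => Real.log a - Real.log (a-y)) ((a-x)⁻¹) x := by
    have hlog := (Real.hasDerivAt_log hax).comp x ((hasDerivAt_id x).const_sub a)
    have := hlog.const_sub (Real.log a)
    refine this.congr_deriv ?_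
    field_simp
  have hterm : ∀ k ∈ Finset.range (n+1),
      HasDerivAt (fun y : ℝ => a^(n-k) * y^(k+1)/((k:ℝ)+1)) (x^k * a^(n-k)) x := by
    intro k _
    have := ((hasDerivAt_pow (k+1) x).const_mul (a^(n-k))).div_const ((k:ℝ)+1)
    refine this.congr_deriv ?_
    push_cast
    field_simp
  have hsum := (HasDerivAt.fun_sum hterm).div_const ((n:ℝ)+1)
  have := (h1.mul h2).add hsum
  refine this.congr_deriv ?_
  rw [show ∑ i ∈ Finset.range (n+1), x^i * a^(n-i) = (x^(n+1)-a^(n+1))/(x-a) by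
    simpa using geom₂_sum hxa (n+1)]
  field_simp
  ring

theorem mellin_weight_one (n : ℕ) :
    (∫ x in (0:ℝ)..1, x ^ n * (-Real.log (1 - x))) =
      (1 / ((n : ℝ) + 1) ^ 2) *
        (1 + ((n : ℝ) + 1) * ∑ i ∈ Finset.Icc 1 n, (1 : ℝ) / i) ∧
    ∀ a : ℝ, 1 < a →
      (∫ x in (0:ℝ)..1, x ^ n * Real.log (a / (a - x))) =
        (1 / ((n : ℝ) + 1) ^ 2) *
          (1 + a ^ (n + 1) * ((n : ℝ) + 1) * (∑ i ∈ Finset.Icc 1 n, (1 / a) ^ i / (i : ℝ))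
            - (a ^ (n + 1) - 1) * ((n : ℝ) + 1) *
                ∑' i : ℕ, (1 / a) ^ (i + 1) / ((i : ℝ) + 1)) := by
  have hn : ((n:ℝ)+1) ≠ 0 := by positivity
  constructor
  · -- part (i)
    set F : ℝ → ℝ := fun x => (∑ k ∈ Finset.range (n+1), x^k)/((n:ℝ)+1) *
        ((1-x) * Real.log (1-x)) +
        (∑ k ∈ Finset.range (n+1), x^(k+1)/((k:ℝ)+1))/((n:ℝ)+1) with hF
    have hFeq : ∀ x : ℝ, x ≠ 1 → F x =
        (x^(n+1) - 1)/((n:ℝ)+1) * (-Real.log (1-x)) +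
          (∑ k ∈ Finset.range (n+1), x^(k+1)/((k:ℝ)+1))/((n:ℝ)+1) := by
      intro x hx
      have hx1 : x - 1 ≠ 0 := sub_ne_zero.mpr hx
      rw [hF]
      simp only
      rw [geom_sum_eq hx]
      field_simp
      ring
    have hderiv : ∀ x ∈ Set.Ioo (0:ℝ) 1, HasDerivAt F (x^n * (-Real.log (1-x))) x := by
      intro x hx
      have hne : x ≠ 1 := ne_of_lt hx.2
      refine (mwo_deriv_i n x hne).congr_of_eventuallyEq ?_
      filter_upwards [IsOpen.mem_nhds isOpen_compl_singleton
        (show x ∈ ({1}ᶜ : Set ℝ) from hne)] with y hy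
      exact hFeq y hy
    have hcontF : Continuous F := by
      have c1 : Continuous fun x : ℝ => (1-x) * Real.log (1-x) :=
        Real.continuous_mul_log.comp (continuous_const.sub continuous_id)
      exact (((continuous_finset_sum _ fun k _ => continuous_pow k).div_const _).mul c1).add
        ((continuous_finset_sum _ fun k _ => (continuous_pow (k+1)).div_const _).div_const _)
    have hnonneg : ∀ x ∈ Set.Ioo (0:ℝ) 1, 0 ≤ x^n * (-Real.log (1-x)) := by
      intro x hx
      exact mul_nonneg (pow_nonneg hx.1.le n)
        (neg_nonneg.mpr (Real.log_nonpos (by linarith [hx.2]) (by linarith [hx.1])))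
    have hint : IntervalIntegrable (fun x => x^n * (-Real.log (1-x))) MeasureTheory.volume 0 1 := by
      apply intervalIntegrable_deriv_of_nonneg (g := F) hcontF.continuousOn
      · intro x hx
        exact hderiv x (by simpa using hx)
      · intro x hx
        exact hnonneg x (by simpa using hx)
    rw [integral_eq_sub_of_hasDeriv_right_of_le (by norm_num) (hcontF.continuousOn)
      (fun x hx => (hderiv x hx).hasDerivWithinAt) hint]
    have hF1 : F 1 = (∑ k ∈ Finset.range (n+1), (1:ℝ)^(k+1)/((k:ℝ)+1))/((n:ℝ)+1) := by
      simp [hF]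
    have hF0 : F 0 = 0 := by
      simp [hF]
    rw [hF1, hF0, sub_zero, mwo_sum_shift 1 n]
    simp only [one_pow]
    field_simp
    ring
  · -- part (ii)
    intro a ha
    have ha0 : (0:ℝ) < a := lt_trans one_pos ha
    have ha1 : (0:ℝ) < a - 1 := by linarith
    have hcongr : Set.EqOn (fun x : ℝ => x ^ n * Real.log (a / (a - x)))
        (fun x : ℝ => x ^ n * (Real.log a - Real.log (a - x))) (Set.uIcc (0:ℝ) 1) := by
      intro x hx
      rw [Set.uIcc_of_le (by norm_num : (0:ℝ) ≤ 1)] at hx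
      have hax : a - x ≠ 0 := ne_of_gt (by linarith [hx.2])
      simp only
      rw [Real.log_div (ne_of_gt ha0) hax]
    rw [intervalIntegral.integral_congr hcongr]
    set F : ℝ → ℝ := fun x => (x^(n+1) - a^(n+1))/((n:ℝ)+1) * (Real.log a - Real.log (a-x)) +
        (∑ k ∈ Finset.range (n+1), a^(n-k) * x^(k+1)/((k:ℝ)+1))/((n:ℝ)+1) with hF
    have hderiv : ∀ x ∈ Set.uIcc (0:ℝ) 1,
        HasDerivAt F (x^n * (Real.log a - Real.log (a-x))) x := by
      intro x hx
      rw [Set.uIcc_of_le (by norm_num : (0:ℝ) ≤ 1)] at hx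
      have hax : a - x ≠ 0 := ne_of_gt (by linarith [hx.2])
      have hxa : x ≠ a := by intro h; rw [h] at hax; simp at hax
      exact mwo_deriv_ii n a x hax hxa
    have hint : IntervalIntegrable (fun x : ℝ => x ^ n * (Real.log a - Real.log (a - x)))
        MeasureTheory.volume 0 1 := by
      apply ContinuousOn.intervalIntegrable
      intro x hx
      rw [Set.uIcc_of_le (by norm_num : (0:ℝ) ≤ 1)] at hx
      have hax : a - x ≠ 0 := ne_of_gt (by linarith [hx.2])
      exact (((continuous_pow n).continuousAt).mul (continuousAt_const.sub
        ((Real.continuousAt_log hax).comp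
          ((continuous_const.sub continuous_id).continuousAt)))).continuousWithinAt
    rw [integral_eq_sub_of_hasDerivAt hderiv hint]
    -- tsum value
    have habs : |1/a| < 1 := by
      rw [abs_of_pos (by positivity)]
      rw [div_lt_one ha0]
      exact ha
    have hts : ∑' i : ℕ, (1/a) ^ (i + 1) / ((i:ℝ) + 1) = -Real.log (1 - 1/a) := by
      rw [← (Real.hasSum_pow_div_log_of_abs_lt_one habs).tsum_eq]
    have hlog1 : -Real.log (1 - 1/a) = Real.log a - Real.log (a-1) := by
      rw [show (1:ℝ) - 1/a = (a-1)/a by field_simp]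
      rw [Real.log_div (ne_of_gt ha1) (ne_of_gt ha0)]
      ring
    rw [hts, hlog1]
    -- boundary values
    have hF0 : F 0 = 0 := by
      simp [hF]
    have hF1 : F 1 = (1 - a^(n+1))/((n:ℝ)+1) * (Real.log a - Real.log (a-1)) +
        (∑ k ∈ Finset.range (n+1), a^(n-k)/((k:ℝ)+1))/((n:ℝ)+1) := by
      simp [hF]
    rw [hF0, hF1, sub_zero]
    -- the finite sum identity
    have hsum2 : ∑ k ∈ Finset.range (n+1), a^(n-k)/((k:ℝ)+1)
        = a^(n+1) * ((∑ i ∈ Finset.Icc 1 n, (1/a)^i/(i:ℝ)) + (1/a)^(n+1)/((n:ℝ)+1)) := by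
      rw [← mwo_sum_shift (1/a) n, Finset.mul_sum]
      apply Finset.sum_congr rfl
      intro k hk
      have hk' : k + 1 ≤ n + 1 := Finset.mem_range.mp hk
      have hkey : a^(n+1) * (1/a)^(k+1) = a^(n-k) := by
        rw [one_div, inv_pow, ← pow_sub₀ a (ne_of_gt ha0) hk']
        congr 1
        omega
      rw [← mul_div_assoc, hkey]
    rw [hsum2]
    have hinv : a^(n+1) * (1/a)^(n+1) = 1 := by
      rw [one_div, inv_pow, mul_inv_cancel₀ (pow_ne_zero _ (ne_of_gt ha0))]
    field_simp
    nlinarith [hinv, sq_nonneg ((n:ℝ)+1)]
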